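/- Assume the family is minimal: for every nonzero v ∈ H, the function x ↦ ⟨v, Γ(x)⟩ is not ν-almost-everywhere equal to a constant. Then the log-partition function A is strictly convex on Θ: for all θ, θ' ∈ Θ with θ ≠ θ' and all t ∈ (0,1), A(tθ + (1−t)θ') < t A(θ) + (1−t) A(θ'). -/

import Mathlib

open MeasureTheory Real
open scoped RealInnerProductSpace ENNReal

section Helpers

variable {X : Type*} [MeasurableSpace X] {ν : Measure X}
variable {H : Type*} [NormedAddCommGroup H] [InnerProductSpace ℝ H] [FiniteDimensional ℝ H]
  [MeasurableSpace H] [BorelSpace H] {Γ : X → H}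

private lemma meas_exp_inner (hΓ : Measurable Γ) (η : H) :
    Measurable fun x => exp ⟪η, Γ x⟫ :=
  (measurable_const.inner hΓ).exp

private lemma holder_Z (hΓ : Measurable Γ) {η₁ η₂ : H}
    (h1 : Integrable (fun x => exp ⟪η₁, Γ x⟫) ν)
    (h2 : Integrable (fun x => exp ⟪η₂, Γ x⟫) ν)
    {t : ℝ} (ht0 : 0 < t) (ht1 : t < 1) :
    Integrable (fun x => exp ⟪t • η₁ + (1 - t) • η₂, Γ x⟫) ν ∧
      ∫ x, exp ⟪t • η₁ + (1 - t) • η₂, Γ x⟫ ∂ν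
        ≤ (∫ x, exp ⟪η₁, Γ x⟫ ∂ν) ^ t * (∫ x, exp ⟪η₂, Γ x⟫ ∂ν) ^ (1 - t) := by
  have ht1' : 0 < 1 - t := by linarith
  have hkey : ∀ x, exp ⟪t • η₁ + (1 - t) • η₂, Γ x⟫
      = exp ⟪η₁, Γ x⟫ ^ t * exp ⟪η₂, Γ x⟫ ^ (1 - t) := by
    intro x
    rw [inner_add_left, real_inner_smul_left, real_inner_smul_left, exp_add,
      mul_comm t, mul_comm (1 - t), exp_mul, exp_mul]
  have hpq : Real.HolderConjugate (1 / t) (1 / (1 - t)) := by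
    refine ⟨?_, by positivity, by positivity⟩
    rw [one_div, inv_inv, one_div, inv_inv, inv_one]; ring
  have hFmeas : AEMeasurable (fun x => ENNReal.ofReal (exp ⟪η₁, Γ x⟫) ^ t) ν :=
    ((meas_exp_inner hΓ η₁).ennreal_ofReal.pow_const t).aemeasurable
  have hGmeas : AEMeasurable (fun x => ENNReal.ofReal (exp ⟪η₂, Γ x⟫) ^ (1 - t)) ν :=
    ((meas_exp_inner hΓ η₂).ennreal_ofReal.pow_const (1 - t)).aemeasurable
  have hmain := ENNReal.lintegral_mul_le_Lp_mul_Lq ν hpq hFmeas hGmeas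
  have e1 : ∫⁻ a, (ENNReal.ofReal (exp ⟪η₁, Γ a⟫) ^ t) ^ (1 / t) ∂ν
      = ∫⁻ a, ENNReal.ofReal (exp ⟪η₁, Γ a⟫) ∂ν :=
    lintegral_congr fun a => by
      rw [← ENNReal.rpow_mul, mul_one_div, div_self ht0.ne', ENNReal.rpow_one]
  have e2 : ∫⁻ a, (ENNReal.ofReal (exp ⟪η₂, Γ a⟫) ^ (1 - t)) ^ (1 / (1 - t)) ∂ν
      = ∫⁻ a, ENNReal.ofReal (exp ⟪η₂, Γ a⟫) ∂ν :=
    lintegral_congr fun a => by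
      rw [← ENNReal.rpow_mul, mul_one_div, div_self ht1'.ne', ENNReal.rpow_one]
  have e3 : ∫⁻ a, ((fun x => ENNReal.ofReal (exp ⟪η₁, Γ x⟫) ^ t)
        * fun x => ENNReal.ofReal (exp ⟪η₂, Γ x⟫) ^ (1 - t)) a ∂ν
      = ∫⁻ a, ENNReal.ofReal (exp ⟪t • η₁ + (1 - t) • η₂, Γ a⟫) ∂ν :=
    lintegral_congr fun a => by
      rw [Pi.mul_apply, hkey a, ENNReal.ofReal_rpow_of_nonneg (exp_pos _).le ht0.le,
        ENNReal.ofReal_rpow_of_nonneg (exp_pos _).le ht1'.le,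
        ENNReal.ofReal_mul (by positivity)]
  rw [e1, e2, e3, one_div_one_div, one_div_one_div,
    (ofReal_integral_eq_lintegral_ofReal h1 (ae_of_all _ fun x => (exp_pos _).le)).symm,
    (ofReal_integral_eq_lintegral_ofReal h2 (ae_of_all _ fun x => (exp_pos _).le)).symm]
    at hmain
  have hfin : ENNReal.ofReal (∫ x, exp ⟪η₁, Γ x⟫ ∂ν) ^ t
      * ENNReal.ofReal (∫ x, exp ⟪η₂, Γ x⟫ ∂ν) ^ (1 - t) < ⊤ :=
    ENNReal.mul_lt_top
      (ENNReal.rpow_lt_top_of_nonneg ht0.le ENNReal.ofReal_ne_top)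
      (ENNReal.rpow_lt_top_of_nonneg ht1'.le ENNReal.ofReal_ne_top)
  have hint : Integrable (fun x => exp ⟪t • η₁ + (1 - t) • η₂, Γ x⟫) ν := by
    refine ⟨(meas_exp_inner hΓ _).aestronglyMeasurable, ?_⟩
    rw [hasFiniteIntegral_iff_ofReal (ae_of_all _ fun x => (exp_pos _).le)]
    exact lt_of_le_of_lt hmain hfin
  refine ⟨hint, ?_⟩
  have hor : ENNReal.ofReal (∫ x, exp ⟪t • η₁ + (1 - t) • η₂, Γ x⟫ ∂ν)
      ≤ ENNReal.ofReal ((∫ x, exp ⟪η₁, Γ x⟫ ∂ν) ^ t * (∫ x, exp ⟪η₂, Γ x⟫ ∂ν) ^ (1 - t)) := by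
    rw [ofReal_integral_eq_lintegral_ofReal hint (ae_of_all _ fun x => (exp_pos _).le),
      ENNReal.ofReal_mul (Real.rpow_nonneg (integral_nonneg fun x => (exp_pos _).le) _),
      ← ENNReal.ofReal_rpow_of_nonneg (integral_nonneg fun x => (exp_pos _).le) ht0.le,
      ← ENNReal.ofReal_rpow_of_nonneg (integral_nonneg fun x => (exp_pos _).le) ht1'.le]
    exact hmain
  exact (ENNReal.ofReal_le_ofReal_iff
    (mul_nonneg (Real.rpow_nonneg (integral_nonneg fun x => (exp_pos _).le) _)
      (Real.rpow_nonneg (integral_nonneg fun x => (exp_pos _).le) _))).1 hor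

private lemma holder_log (hν : ν ≠ 0) (hΓ : Measurable Γ) {η₁ η₂ : H}
    (h1 : Integrable (fun x => exp ⟪η₁, Γ x⟫) ν)
    (h2 : Integrable (fun x => exp ⟪η₂, Γ x⟫) ν)
    {t : ℝ} (ht0 : 0 < t) (ht1 : t < 1) :
    log (∫ x, exp ⟪t • η₁ + (1 - t) • η₂, Γ x⟫ ∂ν)
      ≤ t * log (∫ x, exp ⟪η₁, Γ x⟫ ∂ν) + (1 - t) * log (∫ x, exp ⟪η₂, Γ x⟫ ∂ν) := by
  haveI : NeZero ν := ⟨hν⟩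
  obtain ⟨hint, hle⟩ := holder_Z hΓ h1 h2 ht0 ht1
  have hZ1 : 0 < ∫ x, exp ⟪η₁, Γ x⟫ ∂ν := integral_exp_pos h1
  have hZ2 : 0 < ∫ x, exp ⟪η₂, Γ x⟫ ∂ν := integral_exp_pos h2
  have hZm : 0 < ∫ x, exp ⟪t • η₁ + (1 - t) • η₂, Γ x⟫ ∂ν := integral_exp_pos hint
  calc log (∫ x, exp ⟪t • η₁ + (1 - t) • η₂, Γ x⟫ ∂ν)
      ≤ log ((∫ x, exp ⟪η₁, Γ x⟫ ∂ν) ^ t * (∫ x, exp ⟪η₂, Γ x⟫ ∂ν) ^ (1 - t)) :=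
        Real.log_le_log hZm hle
    _ = t * log (∫ x, exp ⟪η₁, Γ x⟫ ∂ν) + (1 - t) * log (∫ x, exp ⟪η₂, Γ x⟫ ∂ν) := by
        rw [Real.log_mul (Real.rpow_pos_of_pos hZ1 _).ne' (Real.rpow_pos_of_pos hZ2 _).ne',
          Real.log_rpow hZ1, Real.log_rpow hZ2]


private lemma strict_midpoint (hν : ν ≠ 0) (hΓ : Measurable Γ)
    (hmin : ∀ v : H, v ≠ 0 → ¬ ∃ c : ℝ, ∀ᵐ x ∂ν, ⟪v, Γ x⟫ = c)
    {η₁ η₂ : H} (hne : η₁ ≠ η₂)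
    (h1 : Integrable (fun x => exp ⟪η₁, Γ x⟫) ν)
    (h2 : Integrable (fun x => exp ⟪η₂, Γ x⟫) ν) :
    log (∫ x, exp ⟪(1/2 : ℝ) • η₁ + (1/2 : ℝ) • η₂, Γ x⟫ ∂ν)
      < (log (∫ x, exp ⟪η₁, Γ x⟫ ∂ν) + log (∫ x, exp ⟪η₂, Γ x⟫ ∂ν)) / 2 := by
  haveI : NeZero ν := ⟨hν⟩
  set F : X → ℝ := fun x => exp ((1/2 : ℝ) * ⟪η₁, Γ x⟫) with hFdef
  set G : X → ℝ := fun x => exp ((1/2 : ℝ) * ⟪η₂, Γ x⟫) with hGdef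
  have hFsq : ∀ x, F x ^ 2 = exp ⟪η₁, Γ x⟫ := by
    intro x; rw [hFdef, sq, ← Real.exp_add]; congr 1; ring
  have hGsq : ∀ x, G x ^ 2 = exp ⟪η₂, Γ x⟫ := by
    intro x; rw [hGdef, sq, ← Real.exp_add]; congr 1; ring
  have hFmeas : Measurable F := ((measurable_const.inner hΓ).const_mul _).exp
  have hGmeas : Measurable G := ((measurable_const.inner hΓ).const_mul _).exp
  have hFm : MemLp F 2 ν := by
    rw [memLp_two_iff_integrable_sq hFmeas.aestronglyMeasurable]
    exact h1.congr (ae_of_all _ fun x => (hFsq x).symm)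
  have hGm : MemLp G 2 ν := by
    rw [memLp_two_iff_integrable_sq hGmeas.aestronglyMeasurable]
    exact h2.congr (ae_of_all _ fun x => (hGsq x).symm)
  set Fl : Lp ℝ 2 ν := hFm.toLp F with hFl
  set Gl : Lp ℝ 2 ν := hGm.toLp G with hGl
  have hFe : Fl =ᵐ[ν] F := hFm.coeFn_toLp
  have hGe : Gl =ᵐ[ν] G := hGm.coeFn_toLp
  -- inner products
  have hFG : ∀ x, F x * G x = exp ⟪(1/2 : ℝ) • η₁ + (1/2 : ℝ) • η₂, Γ x⟫ := by
    intro x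
    rw [hFdef, hGdef, ← Real.exp_add, inner_add_left, real_inner_smul_left,
      real_inner_smul_left]
  have hinnerFG : (⟪Fl, Gl⟫ : ℝ) = ∫ x, exp ⟪(1/2 : ℝ) • η₁ + (1/2 : ℝ) • η₂, Γ x⟫ ∂ν := by
    rw [L2.inner_def]
    refine integral_congr_ae ?_
    filter_upwards [hFe, hGe] with x hx hy
    simp only [RCLike.inner_apply, conj_trivial, hx, hy, hFG x]
    rw [mul_comm]; exact hFG x
  have hinnerF : ‖Fl‖ ^ 2 = ∫ x, exp ⟪η₁, Γ x⟫ ∂ν := by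
    rw [← real_inner_self_eq_norm_sq, L2.inner_def]
    refine integral_congr_ae ?_
    filter_upwards [hFe] with x hx
    simp only [RCLike.inner_apply, conj_trivial, hx, ← hFsq x, sq]
  have hinnerG : ‖Gl‖ ^ 2 = ∫ x, exp ⟪η₂, Γ x⟫ ∂ν := by
    rw [← real_inner_self_eq_norm_sq, L2.inner_def]
    refine integral_congr_ae ?_
    filter_upwards [hGe] with x hx
    simp only [RCLike.inner_apply, conj_trivial, hx, ← hGsq x, sq]
  have hZ1 : 0 < ∫ x, exp ⟪η₁, Γ x⟫ ∂ν := integral_exp_pos h1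
  have hZ2 : 0 < ∫ x, exp ⟪η₂, Γ x⟫ ∂ν := integral_exp_pos h2
  have hnF : 0 < ‖Fl‖ := by
    have h : 0 < ‖Fl‖ ^ 2 := hinnerF ▸ hZ1
    exact lt_of_le_of_ne (norm_nonneg _) (fun hc => by simp [← hc] at h)
  have hnG : 0 < ‖Gl‖ := by
    have h : 0 < ‖Gl‖ ^ 2 := hinnerG ▸ hZ2
    exact lt_of_le_of_ne (norm_nonneg _) (fun hc => by simp [← hc] at h)
  -- strict Cauchy-Schwarz
  have hstrict : (⟪Fl, Gl⟫ : ℝ) < ‖Fl‖ * ‖Gl‖ := by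
    rw [inner_lt_norm_mul_iff_real]
    intro hcontra
    have hae : ∀ᵐ x ∂ν, ‖Gl‖ * F x = ‖Fl‖ * G x := by
      have h1' : (↑↑(‖Gl‖ • Fl) : X → ℝ) =ᵐ[ν] fun x => ‖Gl‖ * F x := by
        filter_upwards [Lp.coeFn_smul (‖Gl‖) Fl, hFe] with x hx hy
        rw [hx, Pi.smul_apply, hy, smul_eq_mul]
      have h2' : (↑↑(‖Fl‖ • Gl) : X → ℝ) =ᵐ[ν] fun x => ‖Fl‖ * G x := by
        filter_upwards [Lp.coeFn_smul (‖Fl‖) Gl, hGe] with x hx hy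
        rw [hx, Pi.smul_apply, hy, smul_eq_mul]
      filter_upwards [h1', h2'] with x hx hy
      rw [← hx, ← hy, hcontra]
    refine hmin (η₁ - η₂) (sub_ne_zero.2 hne) ⟨2 * log (‖Fl‖ / ‖Gl‖), ?_⟩
    filter_upwards [hae] with x hx
    have hFx : (1/2 : ℝ) * ⟪η₁, Γ x⟫ = log (‖Fl‖ / ‖Gl‖) + (1/2 : ℝ) * ⟪η₂, Γ x⟫ := by
      have : F x = (‖Fl‖ / ‖Gl‖) * G x := by
        field_simp at hx ⊢
        linarith [hx]
      calc (1/2 : ℝ) * ⟪η₁, Γ x⟫ = log (F x) := by rw [hFdef]; simp [Real.log_exp]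
        _ = log (‖Fl‖ / ‖Gl‖ * G x) := by rw [this]
        _ = log (‖Fl‖ / ‖Gl‖) + log (G x) := by
            rw [Real.log_mul (by positivity) (by rw [hGdef]; positivity)]
        _ = log (‖Fl‖ / ‖Gl‖) + (1/2 : ℝ) * ⟪η₂, Γ x⟫ := by
            rw [hGdef]; simp [Real.log_exp]
    rw [inner_sub_left]
    linarith
  -- put everything together
  have hintm : Integrable (fun x => exp ⟪(1/2 : ℝ) • η₁ + (1/2 : ℝ) • η₂, Γ x⟫) ν := by
    refine (L2.integrable_inner (𝕜 := ℝ) Fl Gl).congr ?_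
    filter_upwards [hFe, hGe] with x hx hy
    simp only [RCLike.inner_apply, conj_trivial, hx, hy, hFG x]
    rw [mul_comm]; exact hFG x
  have hZm : 0 < ∫ x, exp ⟪(1/2 : ℝ) • η₁ + (1/2 : ℝ) • η₂, Γ x⟫ ∂ν := integral_exp_pos hintm
  have hlt : log (∫ x, exp ⟪(1/2 : ℝ) • η₁ + (1/2 : ℝ) • η₂, Γ x⟫ ∂ν) < log (‖Fl‖ * ‖Gl‖) := by
    rw [← hinnerFG]
    exact Real.log_lt_log (hinnerFG ▸ hZm) hstrict
  have hlog : 2 * log (‖Fl‖ * ‖Gl‖) = log (∫ x, exp ⟪η₁, Γ x⟫ ∂ν) + log (∫ x, exp ⟪η₂, Γ x⟫ ∂ν) := by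
    rw [← hinnerF, ← hinnerG, Real.log_mul hnF.ne' hnG.ne', Real.log_pow, Real.log_pow]
    push_cast
    ring
  linarith


end Helpers

/-- Under minimality of the exponential family (no nonzero `v` makes `x ↦ ⟪v, Γ x⟫`
ν-a.e. constant), the log-partition function `A` is strictly convex on `Θ`. -/
theorem statement1
    {X : Type*} [MeasurableSpace X] (ν : Measure X) [SigmaFinite ν] (hν : ν ≠ 0)
    {H : Type*} [NormedAddCommGroup H] [InnerProductSpace ℝ H] [FiniteDimensional ℝ H]
    [MeasurableSpace H] [BorelSpace H]
    (Γ : X → H) (hΓ : Measurable Γ)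
    (Θ : Set H) (hΘ : Θ = {θ : H | Integrable (fun x => exp ⟪θ, Γ x⟫) ν})
    (A : H → ℝ) (hA : ∀ θ, A θ = log (∫ x, exp ⟪θ, Γ x⟫ ∂ν))
    (hmin : ∀ v : H, v ≠ 0 → ¬ ∃ c : ℝ, ∀ᵐ x ∂ν, ⟪v, Γ x⟫ = c) :
    ∀ θ ∈ Θ, ∀ θ' ∈ Θ, θ ≠ θ' → ∀ t ∈ Set.Ioo (0:ℝ) 1,
      A (t • θ + (1 - t) • θ') < t * A θ + (1 - t) * A θ' := by
  intro θ hθ θ' hθ' hne t ht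
  rw [hΘ, Set.mem_setOf_eq] at hθ hθ'
  obtain ⟨ht0, ht1⟩ := ht
  rw [hA, hA, hA]
  by_contra hcon
  push_neg at hcon
  have hub := holder_log hν hΓ hθ hθ' ht0 ht1
  have heq : log (∫ x, exp ⟪t • θ + (1 - t) • θ', Γ x⟫ ∂ν)
      = t * log (∫ x, exp ⟪θ, Γ x⟫ ∂ν) + (1 - t) * log (∫ x, exp ⟪θ', Γ x⟫ ∂ν) :=
    le_antisymm hub hcon
  set s : ℝ := t / 2 with hs
  have hs0 : 0 < s := by positivity
  have hs1 : s < 1 := by rw [hs]; linarith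
  have hm_int := (holder_Z hΓ hθ hθ' hs0 hs1).1
  set a : ℝ := (1 - t) / (1 - s) with haa
  have hs1' : 0 < 1 - s := by linarith
  have ha0 : 0 < a := by rw [haa]; exact div_pos (by linarith) hs1'
  have ha1 : a < 1 := by
    rw [haa, div_lt_one hs1']
    rw [hs]; linarith
  have ha2 : a * (1 - s) = 1 - t := by
    rw [haa, div_mul_cancel₀]
    exact hs1'.ne'
  have ha3 : a * s + (1 - a) = t := by nlinarith [ha2]
  have hvec : t • θ + (1 - t) • θ' = a • (s • θ + (1 - s) • θ') + (1 - a) • θ := by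
    have expand : a • (s • θ + (1 - s) • θ') + (1 - a) • θ
        = (a * s + (1 - a)) • θ + (a * (1 - s)) • θ' := by module
    rw [expand, ha3, ha2]
  have hcomb := holder_log hν hΓ hm_int hθ ha0 ha1
  rw [← hvec] at hcomb
  -- strict midpoint between θ' and t•θ+(1-t)•θ'
  have hne2 : θ' ≠ t • θ + (1 - t) • θ' := by
    intro hc
    apply hne
    apply smul_right_injective H ht0.ne'
    have hd : t • θ - t • θ' = (t • θ + (1 - t) • θ') - θ' := by module
    rw [← hc, sub_self] at hd
    exact sub_eq_zero.1 hd
  have hmid := strict_midpoint hν hΓ hmin hne2 hθ' (holder_Z hΓ hθ hθ' ht0 ht1).1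
  have hmidvec : (1/2 : ℝ) • θ' + (1/2 : ℝ) • (t • θ + (1 - t) • θ')
      = s • θ + (1 - s) • θ' := by
    rw [hs]; module
  rw [hmidvec] at hmid
  -- hmid : log Z m < (log Zθ' + log Zθt)/2
  have harith : (log (∫ x, exp ⟪θ', Γ x⟫ ∂ν)
        + log (∫ x, exp ⟪t • θ + (1 - t) • θ', Γ x⟫ ∂ν)) / 2
      = s * log (∫ x, exp ⟪θ, Γ x⟫ ∂ν) + (1 - s) * log (∫ x, exp ⟪θ', Γ x⟫ ∂ν) := by
    rw [heq, hs]; ring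
  have hmid' : log (∫ x, exp ⟪s • θ + (1 - s) • θ', Γ x⟫ ∂ν)
      < s * log (∫ x, exp ⟪θ, Γ x⟫ ∂ν) + (1 - s) * log (∫ x, exp ⟪θ', Γ x⟫ ∂ν) := by
    rw [← harith]; exact hmid
  have h5 : a * log (∫ x, exp ⟪s • θ + (1 - s) • θ', Γ x⟫ ∂ν)
      < a * (s * log (∫ x, exp ⟪θ, Γ x⟫ ∂ν) + (1 - s) * log (∫ x, exp ⟪θ', Γ x⟫ ∂ν)) :=
    mul_lt_mul_of_pos_left hmid' ha0
  have hident : a * (s * log (∫ x, exp ⟪θ, Γ x⟫ ∂ν) + (1 - s) * log (∫ x, exp ⟪θ', Γ x⟫ ∂ν))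
      + (1 - a) * log (∫ x, exp ⟪θ, Γ x⟫ ∂ν)
      = t * log (∫ x, exp ⟪θ, Γ x⟫ ∂ν) + (1 - t) * log (∫ x, exp ⟪θ', Γ x⟫ ∂ν) := by
    rw [← ha2, ← ha3]; ring
  linarith [hcomb, h5, hident, heq]
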